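/- Let n ≥ 1, z : Fin n → ℤ, and t ∈ ℤ. There exists x ∈ ℂ^n satisfying (i) for every k, 2·Re(x_k) − 2·|x_k|² = 0 and −2·Im(x_k) = 0, (ii) Σ_k Re(x_k) ≥ 1, and (iii) Σ_k z_k·Re(x_k) = t, if and only if there exists a nonempty subset T ⊆ Fin n with Σ_{k ∈ T} z_k = t. Consequently, the subset-sum decision problem for (z, t) reduces to deciding whether the quadratically constrained program max Σ_k z_k·Re(x_k) subject to (i), (ii) and Σ_k z_k·Re(x_k) ≤ t attains the value t. -/

import Mathlib

lemma scqp_main (n : ℕ) (z : Fin n → ℤ) (t : ℤ) :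
    (∃ x : Fin n → ℂ,
        (∀ k : Fin n,
          2 * (x k).re - 2 * ‖x k‖ ^ 2 = 0 ∧ -(2 * (x k).im) = 0) ∧
        1 ≤ ∑ k, (x k).re ∧
        ∑ k, (z k : ℝ) * (x k).re = (t : ℝ)) ↔
      (∃ T : Finset (Fin n), T.Nonempty ∧ ∑ k ∈ T, z k = t) := by
  constructor
  · rintro ⟨x, hc, hpos, hval⟩
    have hx : ∀ k, (x k).re = 0 ∨ (x k).re = 1 := by
      intro k
      obtain ⟨h1, h2⟩ := hc k
      have him : (x k).im = 0 := by linarith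
      have habs : ‖x k‖ ^ 2 = (x k).re ^ 2 := by
        rw [Complex.sq_norm, Complex.normSq_apply, him]; ring
      rw [habs] at h1
      have : (x k).re * ((x k).re - 1) = 0 := by ring_nf; linarith
      rcases mul_eq_zero.mp this with h | h
      · left; exact h
      · right; linarith
    refine ⟨Finset.univ.filter (fun k => (x k).re = 1), ?_, ?_⟩
    · by_contra hne
      rw [Finset.not_nonempty_iff_eq_empty] at hne
      have : ∀ k, (x k).re = 0 := by
        intro k
        rcases hx k with h | h
        · exact h
        · exfalso
          have : k ∈ Finset.univ.filter (fun k => (x k).re = 1) := by simp [h]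
          simp [hne] at this
      simp [this] at hpos
      linarith
    · have : ((∑ k ∈ Finset.univ.filter (fun k => (x k).re = 1), z k : ℤ) : ℝ) = (t : ℝ) := by
        push_cast
        rw [← hval, Finset.sum_filter]
        apply Finset.sum_congr rfl
        intro k _
        rcases hx k with h | h <;> simp [h]
      exact_mod_cast this
  · rintro ⟨T, hT, hsum⟩
    refine ⟨fun k => if k ∈ T then 1 else 0, ?_, ?_, ?_⟩
    · intro k; by_cases h : k ∈ T <;> simp [h]
    · have : ∑ k, (if k ∈ T then (1:ℂ) else 0).re = (T.card : ℝ) := by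
        simp [Finset.sum_ite_mem, apply_ite Complex.re]
      rw [this]
      exact_mod_cast Nat.one_le_iff_ne_zero.mpr (Finset.card_ne_zero_of_mem hT.choose_spec)
    · have : ∑ k, (z k : ℝ) * (if k ∈ T then (1:ℂ) else 0).re
          = ∑ k ∈ T, (z k : ℝ) := by
        simp [apply_ite Complex.re, mul_ite, Finset.sum_ite_mem]
      rw [this]
      exact_mod_cast hsum


/-- subset sum as a SCQP. For integers `z : Fin n → ℤ` and `t : ℤ`,
there is a vector `x ∈ ℂ^n` satisfying the scattering constraints (forcing
`x_k ∈ {0,1}`), the nontriviality constraint `Σ_k Re(x_k) ≥ 1`, and the value condition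
`Σ_k z_k·Re(x_k) = t`, iff some nonempty subset of the `z_k` sums to `t`; equivalently,
the quadratically constrained program with the extra constraint `Σ_k z_k·Re(x_k) ≤ t`
attains the value `t` iff some nonempty subset sums to `t`. -/
theorem subset_sum_iff_scqp_feasible
    (n : ℕ) (hn : 1 ≤ n) (z : Fin n → ℤ) (t : ℤ) :
    ((∃ x : Fin n → ℂ,
        (∀ k : Fin n,
          2 * (x k).re - 2 * ‖x k‖ ^ 2 = 0 ∧ -(2 * (x k).im) = 0) ∧
        1 ≤ ∑ k, (x k).re ∧
        ∑ k, (z k : ℝ) * (x k).re = (t : ℝ)) ↔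
      (∃ T : Finset (Fin n), T.Nonempty ∧ ∑ k ∈ T, z k = t)) ∧
    ((∃ x : Fin n → ℂ,
        (∀ k : Fin n,
          2 * (x k).re - 2 * ‖x k‖ ^ 2 = 0 ∧ -(2 * (x k).im) = 0) ∧
        1 ≤ ∑ k, (x k).re ∧
        ∑ k, (z k : ℝ) * (x k).re ≤ (t : ℝ) ∧
        ∑ k, (z k : ℝ) * (x k).re = (t : ℝ)) ↔
      (∃ T : Finset (Fin n), T.Nonempty ∧ ∑ k ∈ T, z k = t)) := by
  refine ⟨scqp_main n z t, ?_⟩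
  rw [← scqp_main n z t]
  constructor
  · rintro ⟨x, hc, hp, _, hv⟩; exact ⟨x, hc, hp, hv⟩
  · rintro ⟨x, hc, hp, hv⟩; exact ⟨x, hc, hp, le_of_eq hv, hv⟩
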